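/- For each bounded linear functional ω ∈ J_σ(R)* and each π ∈ R, there is a unique bounded operator π(ω) ∈ B(H_π) such that ‖π(ω)‖ ≤ ‖ω‖ and ω applied to the coefficient function x ↦ ⟨ψ, π(x)φ⟩ equals ⟨ψ, π(ω)φ⟩ for all ψ, φ ∈ H_π. Moreover π(ω) preserves each cyclic subspace of G in H_π: π(ω)H_ψ ⊆ H_ψ for every ψ ∈ H_π, where H_ψ := closed span of π(G)ψ. -/

import Mathlib

open scoped MultiplierAlgebra
open Filter Topology

noncomputable section

/-- A jointly continuous normalized circle-valued 2-cocycle on `G`. -/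
def IsNormalizedCocycle (G : Type) [Group G] [TopologicalSpace G] (σ : G → G → ℂ) : Prop :=
  (∀ x y, ‖σ x y‖ = 1) ∧
  (∀ x y z, σ x y * σ (x * y) z = σ y z * σ x (y * z)) ∧
  (∀ x, σ x 1 = 1) ∧ (∀ x, σ 1 x = 1) ∧ (∀ x, σ x x⁻¹ = 1) ∧
  (∀ x y, (starRingEnd ℂ) (σ x y) = σ y⁻¹ x⁻¹) ∧
  Continuous fun p : G × G => σ p.1 p.2

/-- A family of bounded operators on a complex Hilbert space, indexed by `G`:
the carrier of a (possible) unitary `σ`-representation of `G`. -/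
structure PreRep (G : Type) where
  H : Type
  [instNACG : NormedAddCommGroup H]
  [instIPS : InnerProductSpace ℂ H]
  [instComplete : CompleteSpace H]
  U : G → H →L[ℂ] H

attribute [instance] PreRep.instNACG PreRep.instIPS PreRep.instComplete

/-- `ρ` is a unitary `σ`-representation of `G` (not necessarily continuous). -/
def PreRep.IsRep {G : Type} [Group G] (σ : G → G → ℂ) (ρ : PreRep G) : Prop :=
  (∀ x, ρ.U x ∈ unitary (ρ.H →L[ℂ] ρ.H)) ∧
  (∀ x y, ρ.U x ∘L ρ.U y = σ x y • ρ.U (x * y))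

/-- Strong-operator continuity of a representation of `G`. -/
def PreRep.IsSOTCont {G : Type} [TopologicalSpace G] (ρ : PreRep G) : Prop :=
  ∀ ψ : ρ.H, Continuous fun x : G => ρ.U x ψ

/-- The set `Rep_σ G` of strong-operator continuous unitary `σ`-representations. -/
def ContRepSet (G : Type) [Group G] [TopologicalSpace G] (σ : G → G → ℂ) : Set (PreRep G) :=
  {ρ | ρ.IsRep σ ∧ ρ.IsSOTCont}

/-- A nondegenerate Hilbert-space representation of a (non-unital) C*-algebra `L`. -/
structure RepOf (L : Type) [NonUnitalCStarAlgebra L] where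
  H : Type
  [instNACG : NormedAddCommGroup H]
  [instIPS : InnerProductSpace ℂ H]
  [instComplete : CompleteSpace H]
  ρ : L →⋆ₙₐ[ℂ] (H →L[ℂ] H)
  nondeg : (Submodule.span ℂ {ψ : H | ∃ (a : L) (v : H), ρ a v = ψ}).topologicalClosure = ⊤

attribute [instance] RepOf.instNACG RepOf.instIPS RepOf.instComplete

/-- A `σ`-group algebra for the pair `(G, R)`:  a C*-algebra `L` with a `σ`-homomorphism
`φ` of `G` into the unitaries of the multiplier algebra `𝓜(ℂ, L)`, such that the
extension map `θ` (defined on the nondegenerate representations `π` of `L` by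
`θ(π)(g) (π(a)ψ) = π((φ g)·a) ψ`, i.e. the strict extension of `π` evaluated at `φ(g)`)
is injective with image exactly `R`. -/
structure SigmaGroupAlgebra (G : Type) [Group G] [TopologicalSpace G] (σ : G → G → ℂ)
    (R : Set (PreRep G)) where
  L : Type
  [instL : NonUnitalCStarAlgebra L]
  φ : G → 𝓜(ℂ, L)
  φ_unitary : ∀ g, φ g ∈ unitary 𝓜(ℂ, L)
  φ_mul : ∀ g h, φ g * φ h = σ g h • φ (g * h)
  θU : (π : RepOf L) → G → (π.H →L[ℂ] π.H)
  θ_ext : ∀ (π : RepOf L) (g : G) (a : L) (ψ : π.H),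
    θU π g (π.ρ a ψ) = π.ρ ((φ g).fst a) ψ
  θ_rep : ∀ π : RepOf L, (PreRep.mk π.H (θU π)).IsRep σ
  θ_inj : ∀ π₁ π₂ : RepOf L,
    PreRep.mk π₁.H (θU π₁) = PreRep.mk π₂.H (θU π₂) → π₁ = π₂
  θ_range : {ρ : PreRep G | ∃ π : RepOf L, PreRep.mk π.H (θU π) = ρ} = R

attribute [instance] SigmaGroupAlgebra.instL

/-- the (Hilbert space) direct sum of two representation families -/
def PreRep.dsum {G : Type} (ρ₁ ρ₂ : PreRep G) : PreRep G where
  H := WithLp 2 (ρ₁.H × ρ₂.H)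
  U x := ((WithLp.prodContinuousLinearEquiv 2 ℂ ρ₁.H ρ₂.H).symm :
            (ρ₁.H × ρ₂.H) →L[ℂ] WithLp 2 (ρ₁.H × ρ₂.H)).comp
    (((ρ₁.U x).prodMap (ρ₂.U x)).comp
      ((WithLp.prodContinuousLinearEquiv 2 ℂ ρ₁.H ρ₂.H :
        WithLp 2 (ρ₁.H × ρ₂.H) →L[ℂ] ρ₁.H × ρ₂.H)))

section FunctionSpaces

variable {G : Type} [Group G] [TopologicalSpace G]

/-- The norm of `ν = Σ c_x δ_x` in the twisted discrete group C*-algebra `C*_σ(G_d)`: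
the supremum of the operator norms over all unitary `σ`-representations. -/
def discNorm (σ : G → G → ℂ) (ν : G →₀ ℂ) : ℝ :=
  ⨆ ρ : {ρ : PreRep G // ρ.IsRep σ}, ‖ν.sum fun x c => c • (ρ.1.U x)‖

/-- The norm `‖f‖_*` of a function on `G`, as a functional on `C*_σ(G_d)`:
`‖f‖_* = sup { |f̌(A)| : A ∈ C*_σ(G_d), ‖A‖ ≤ 1 }`, where it suffices to let `A` run
over the dense unit ball of the twisted group ring. -/
def starNorm (σ : G → G → ℂ) (f : G → ℂ) : ℝ :=
  ⨆ ν : {ν : G →₀ ℂ // discNorm σ ν ≤ 1}, ‖ν.1.sum fun x c => c * f x‖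

/-- The supremum norm `‖f‖_∞`. -/
def supNorm (f : G → ℂ) : ℝ := ⨆ x : G, ‖f x‖

/-- `B_σ(R)`: the set of coefficient functions of representations in `R`. -/
def BCoef (σ : G → G → ℂ) (R : Set (PreRep G)) : Set (G → ℂ) :=
  {f | ∃ ρ ∈ R, ∃ ψ φ : ρ.H, f = fun x => (inner ℂ ψ (ρ.U x φ) : ℂ)}

/-- left `σ`-translation `(λ_x f)(y) = σ(x,y) f(xy)`. -/
def ltrans (σ : G → G → ℂ) (x : G) (f : G → ℂ) : G → ℂ := fun y => σ x y * f (x * y)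

/-- right `σ`-translation `(ρ_x f)(y) = σ(y,x) f(yx)`. -/
def rtrans (σ : G → G → ℂ) (x : G) (f : G → ℂ) : G → ℂ := fun y => σ y x * f (y * x)

/-- the involution `f*(x) = conj (f (x⁻¹))`. -/
def finv (f : G → ℂ) : G → ℂ := fun x => (starRingEnd ℂ) (f x⁻¹)

/-- `J_σ(R)`: the completion of `B_σ(R)` in the norm `‖·‖_*`, realized concretely as the
set of functions approximable in `‖·‖_*` by elements of `B_σ(R)`. -/
def Jset (σ : G → G → ℂ) (R : Set (PreRep G)) : Set (G → ℂ) :=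
  {f | ∀ ε > (0:ℝ), ∃ g ∈ BCoef σ R, starNorm σ (f - g) < ε}

/-- `K_σ(R)`: the completion of `B_σ(R)` in the norm `‖·‖_∞`, realized concretely as the
set of functions uniformly approximable by elements of `B_σ(R)`. -/
def Kset (σ : G → G → ℂ) (R : Set (PreRep G)) : Set (G → ℂ) :=
  {f | ∀ ε > (0:ℝ), ∃ g ∈ BCoef σ R, supNorm (f - g) < ε}

end FunctionSpaces

section Packages

/-- A realization of the Banach space `J_σ(R)`: the completion of the space `B_σ(R)` of
coefficient functions in the norm `‖·‖_*`, together with the left and right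
`σ`-translations, the involution, and the point evaluations `δ_x ∈ J_σ(R)*`. -/
structure JPackage (G : Type) [Group G] [TopologicalSpace G] (σ : G → G → ℂ)
    (R : Set (PreRep G)) where
  /-- `B_σ(R)` as a subspace of the functions on `G` -/
  Bmod : Submodule ℂ (G → ℂ)
  Bmod_eq : (Bmod : Set (G → ℂ)) = BCoef σ R
  /-- the Banach space `J_σ(R)` -/
  J : Type
  [instJ1 : NormedAddCommGroup J]
  [instJ2 : NormedSpace ℂ J]
  [instJ3 : CompleteSpace J]
  /-- the canonical inclusion of `B_σ(R)` in `J_σ(R)`, isometric w.r.t. `‖·‖_*` and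
  with dense range -/
  ι : Bmod →ₗ[ℂ] J
  ι_norm : ∀ f : Bmod, ‖ι f‖ = starNorm σ (f : G → ℂ)
  denseRange : DenseRange fun f : Bmod => ι f
  /-- left `σ`-translation on `B_σ(R)` -/
  lamB : G → Bmod → Bmod
  lamB_spec : ∀ (x : G) (f : Bmod), ((lamB x f : Bmod) : G → ℂ) = ltrans σ x (f : G → ℂ)
  /-- right `σ`-translation on `B_σ(R)` -/
  rhoB : G → Bmod → Bmod
  rhoB_spec : ∀ (x : G) (f : Bmod), ((rhoB x f : Bmod) : G → ℂ) = rtrans σ x (f : G → ℂ)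
  /-- the involution `f ↦ f*` on `B_σ(R)` -/
  starB : Bmod → Bmod
  starB_spec : ∀ f : Bmod, ((starB f : Bmod) : G → ℂ) = finv (f : G → ℂ)
  /-- the point evaluations `δ_x : f ↦ f(x)`, as elements of `J_σ(R)*` -/
  delta : G → (J →L[ℂ] ℂ)
  delta_spec : ∀ (x : G) (f : Bmod), delta x (ι f) = (f : G → ℂ) x

attribute [instance] JPackage.instJ1 JPackage.instJ2 JPackage.instJ3

variable {G : Type} [Group G] [TopologicalSpace G] {σ : G → G → ℂ} {R : Set (PreRep G)}

/-- `J_σ(R)` together with the convolution and involution on its dual `J_σ(R)*`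
(established in Theorem 3.3 of the paper), and the representations `ω ↦ π(ω)` of
`J_σ(R)*` associated to the elements `π ∈ R` (Lemma 3.1). -/
structure ConvPackage (G : Type) [Group G] [TopologicalSpace G] (σ : G → G → ℂ)
    (R : Set (PreRep G)) extends JPackage G σ R where
  /-- the convolution `(ξ*ω)(f) = ξ_x(ω_y(σ(x,y)f(xy))) = ξ(f^ω)` on `J_σ(R)*` -/
  conv : (J →L[ℂ] ℂ) → (J →L[ℂ] ℂ) → (J →L[ℂ] ℂ)
  conv_spec : ∀ (ξ ω : J →L[ℂ] ℂ) (f g : Bmod),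
    ((g : G → ℂ) = fun x => ω (ι (lamB x f))) → conv ξ ω (ι f) = ξ (ι g)
  /-- the involution `ω*(f) = conj (ω (f*))` on `J_σ(R)*` -/
  invol : (J →L[ℂ] ℂ) → (J →L[ℂ] ℂ)
  invol_spec : ∀ (ω : J →L[ℂ] ℂ) (f : Bmod),
    invol ω (ι f) = (starRingEnd ℂ) (ω (ι (starB f)))
  /-- for `ρ ∈ R` and `ω ∈ J_σ(R)*`, the operator `ρ(ω)` with
  `⟨ψ, ρ(ω) φ⟩ = ω(x ↦ ⟨ψ, ρ(x) φ⟩)` -/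
  opRep : (ρ : PreRep G) → ρ ∈ R → (J →L[ℂ] ℂ) → (ρ.H →L[ℂ] ρ.H)
  opRep_spec : ∀ (ρ : PreRep G) (hρ : ρ ∈ R) (ω : J →L[ℂ] ℂ) (ψ φ : ρ.H) (f : Bmod),
    ((f : G → ℂ) = fun x => (inner ℂ ψ (ρ.U x φ) : ℂ)) →
      (inner ℂ ψ (opRep ρ hρ ω φ) : ℂ) = ω (ι f)

/-- A d-ideal of `J_σ(R)*`: a nonzero norm-closed *-subalgebra `S` with
`δ_x * S ⊆ S ⊇ S * δ_x` for all `x ∈ G`. -/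
structure IsDIdealSet (P : ConvPackage G σ R) (S : Set (P.J →L[ℂ] ℂ)) : Prop where
  nonzero : ∃ ω ∈ S, ω ≠ 0
  zero_mem : (0 : P.J →L[ℂ] ℂ) ∈ S
  add_mem : ∀ ω₁ ∈ S, ∀ ω₂ ∈ S, ω₁ + ω₂ ∈ S
  smul_mem : ∀ (c : ℂ), ∀ ω ∈ S, c • ω ∈ S
  isClosed : IsClosed S
  conv_mem : ∀ ω₁ ∈ S, ∀ ω₂ ∈ S, P.conv ω₁ ω₂ ∈ S
  invol_mem : ∀ ω ∈ S, P.invol ω ∈ S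
  delta_conv_mem : ∀ (x : G), ∀ ω ∈ S, P.conv (P.delta x) ω ∈ S
  conv_delta_mem : ∀ (x : G), ∀ ω ∈ S, P.conv ω (P.delta x) ∈ S

/-- A nondegenerate Hilbert space representation of the subalgebra `S ⊆ J_σ(R)*`
(normalized to vanish off `S`). -/
structure DRep (P : ConvPackage G σ R) (S : Set (P.J →L[ℂ] ℂ)) where
  H : Type
  [instNACG : NormedAddCommGroup H]
  [instIPS : InnerProductSpace ℂ H]
  [instComplete : CompleteSpace H]
  ρ : (P.J →L[ℂ] ℂ) → (H →L[ℂ] H)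
  zero_off : ∀ ω ∉ S, ρ ω = 0
  map_add : ∀ ω₁ ∈ S, ∀ ω₂ ∈ S, ρ (ω₁ + ω₂) = ρ ω₁ + ρ ω₂
  map_smul : ∀ (c : ℂ), ∀ ω ∈ S, ρ (c • ω) = c • ρ ω
  map_mul : ∀ ω₁ ∈ S, ∀ ω₂ ∈ S, ρ (P.conv ω₁ ω₂) = ρ ω₁ ∘L ρ ω₂
  map_star : ∀ ω ∈ S, ρ (P.invol ω) = star (ρ ω)
  bounded : ∀ ω ∈ S, ‖ρ ω‖ ≤ ‖ω‖
  nondeg : (Submodule.span ℂ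
    {ψ : H | ∃ ω ∈ S, ∃ v : H, ρ ω v = ψ}).topologicalClosure = ⊤

attribute [instance] DRep.instNACG DRep.instIPS DRep.instComplete

/-- `V = θ(π)` for a nondegenerate representation `π` of the subalgebra `S ⊆ J_σ(R)*`:
the unitary `σ`-representation of `G` determined by `V(x) π(ω)ψ = π(δ_x * ω)ψ`. -/
def DRep.IsExtOf {P : ConvPackage G σ R} {S : Set (P.J →L[ℂ] ℂ)} (π : DRep P S)
    (V : G → (π.H →L[ℂ] π.H)) : Prop :=
  (PreRep.mk π.H V).IsRep σ ∧
  ∀ (x : G), ∀ ω ∈ S, ∀ ψ : π.H, V x (π.ρ ω ψ) = π.ρ (P.conv (P.delta x) ω) ψ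

end Packages

section AuxStmt8

variable {G : Type} [Group G] [TopologicalSpace G] {σ : G → G → ℂ}

lemma aux_unitary_norm_le_one {H : Type} [NormedAddCommGroup H] [InnerProductSpace ℂ H]
    [CompleteSpace H] {u : H →L[ℂ] H} (hu : u ∈ unitary (H →L[ℂ] H)) : ‖u‖ ≤ 1 := by
  have h1 : star u * u = 1 := hu.1
  have h2 : ‖star u * u‖ = ‖u‖ * ‖u‖ := CStarRing.norm_star_mul_self
  rw [h1] at h2
  have h3 : ‖(1 : H →L[ℂ] H)‖ ≤ 1 := by
    rw [ContinuousLinearMap.one_def]; exact ContinuousLinearMap.norm_id_le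
  nlinarith [norm_nonneg u]

lemma aux_sum_norm_bound (ρ' : PreRep G) (h : ρ'.IsRep σ) (ν : G →₀ ℂ) :
    ‖ν.sum fun x c => c • ρ'.U x‖ ≤ ν.sum fun x c => ‖c‖ := by
  rw [Finsupp.sum, Finsupp.sum]
  refine (norm_sum_le _ _).trans (Finset.sum_le_sum fun x _ => ?_)
  rw [norm_smul]
  have h1 : ‖ρ'.U x‖ ≤ 1 := aux_unitary_norm_le_one (h.1 x)
  nlinarith [norm_nonneg (ν x), norm_nonneg (ρ'.U x)]

lemma aux_le_discNorm (ρ' : PreRep G) (h : ρ'.IsRep σ) (ν : G →₀ ℂ) :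
    ‖ν.sum fun x c => c • ρ'.U x‖ ≤ discNorm σ ν := by
  refine le_ciSup_of_le ?_ (⟨ρ', h⟩ : {ρ : PreRep G // ρ.IsRep σ}) le_rfl
  exact ⟨ν.sum fun x c => ‖c‖, by
    rintro r ⟨ρ'', rfl⟩; exact aux_sum_norm_bound ρ''.1 ρ''.2 ν⟩

lemma aux_starNorm_coef_le (ρ : PreRep G) (h : ρ.IsRep σ) (ψ φ : ρ.H) :
    starNorm σ (fun x => (inner ℂ ψ (ρ.U x φ) : ℂ)) ≤ ‖ψ‖ * ‖φ‖ := by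
  refine Real.iSup_le (fun ν => ?_) (by positivity)
  have key : (ν.1.sum fun x c => c * (inner ℂ ψ (ρ.U x φ) : ℂ)) =
      inner ℂ ψ ((ν.1.sum fun x c => c • ρ.U x) φ) := by
    rw [Finsupp.sum, Finsupp.sum, ContinuousLinearMap.sum_apply, inner_sum]
    refine Finset.sum_congr rfl fun x _ => ?_
    rw [ContinuousLinearMap.smul_apply, inner_smul_right]
  rw [key]
  set A := ν.1.sum fun x c => c • ρ.U x with hA
  have h1 : ‖(inner ℂ ψ (A φ) : ℂ)‖ ≤ ‖ψ‖ * ‖A φ‖ := norm_inner_le_norm ψ (A φ)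
  have h2 : ‖A φ‖ ≤ ‖A‖ * ‖φ‖ := A.le_opNorm φ
  have h3 : ‖A‖ ≤ 1 := (aux_le_discNorm ρ h ν.1).trans ν.2
  have h4 : ‖A φ‖ ≤ ‖φ‖ := h2.trans (by nlinarith [norm_nonneg φ])
  calc ‖(inner ℂ ψ (A φ) : ℂ)‖ ≤ ‖ψ‖ * ‖A φ‖ := h1
  _ ≤ ‖ψ‖ * ‖φ‖ := mul_le_mul_of_nonneg_left h4 (norm_nonneg ψ)

end AuxStmt8

/-- For each `ω ∈ J_σ(R)*` and each `π ∈ R` there is a unique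
`π(ω) ∈ B(H_π)` with `‖π(ω)‖ ≤ ‖ω‖` and `ω(x ↦ ⟨ψ, π(x)φ⟩) = ⟨ψ, π(ω)φ⟩` for all
`ψ, φ ∈ H_π`; moreover `π(ω)` preserves each cyclic subspace `H_ψ = [π(G)ψ]`. -/
theorem stmt_8 {G : Type} [Group G] [TopologicalSpace G] [IsTopologicalGroup G] [T2Space G]
    (σ : G → G → ℂ) (hσ : IsNormalizedCocycle G σ)
    (R : Set (PreRep G)) (hR : ∀ ρ ∈ R, ρ.IsRep σ)
    (hDS : ∀ ρ₁ ∈ R, ∀ ρ₂ ∈ R, ρ₁.dsum ρ₂ ∈ R)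
    (P : JPackage G σ R)
    (ω : P.J →L[ℂ] ℂ) (ρ : PreRep G) (hρ : ρ ∈ R) :
    ∃ T : ρ.H →L[ℂ] ρ.H,
      ‖T‖ ≤ ‖ω‖ ∧
      (∀ (ψ φ : ρ.H) (f : P.Bmod),
        ((f : G → ℂ) = fun x => (inner ℂ ψ (ρ.U x φ) : ℂ)) →
          (inner ℂ ψ (T φ) : ℂ) = ω (P.ι f)) ∧
      (∀ T' : ρ.H →L[ℂ] ρ.H,
        (∀ (ψ φ : ρ.H) (f : P.Bmod),
          ((f : G → ℂ) = fun x => (inner ℂ ψ (ρ.U x φ) : ℂ)) →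
            (inner ℂ ψ (T' φ) : ℂ) = ω (P.ι f)) → T' = T) ∧
      (∀ ψ : ρ.H, ∀ φ ∈ (Submodule.span ℂ (Set.range fun x : G => ρ.U x ψ)).topologicalClosure,
        T φ ∈ (Submodule.span ℂ (Set.range fun x : G => ρ.U x ψ)).topologicalClosure) := by
  classical
  obtain ⟨hρ1, hρ2⟩ := hR ρ hρ
  have hmem : ∀ ψ φ : ρ.H, (fun x => (inner ℂ ψ (ρ.U x φ) : ℂ)) ∈ P.Bmod := fun ψ φ => by
    have h1 : (fun x => (inner ℂ ψ (ρ.U x φ) : ℂ)) ∈ BCoef σ R := ⟨ρ, hρ, ψ, φ, rfl⟩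
    rwa [← SetLike.mem_coe, P.Bmod_eq]
  let fB : ρ.H → ρ.H → P.Bmod := fun ψ φ => ⟨fun x => (inner ℂ ψ (ρ.U x φ) : ℂ), hmem ψ φ⟩
  have hBnorm : ∀ ψ φ : ρ.H, ‖ω (P.ι (fB ψ φ))‖ ≤ ‖ω‖ * ‖φ‖ * ‖ψ‖ := by
    intro ψ φ
    calc ‖ω (P.ι (fB ψ φ))‖ ≤ ‖ω‖ * ‖P.ι (fB ψ φ)‖ := ω.le_opNorm _
    _ ≤ ‖ω‖ * ‖φ‖ * ‖ψ‖ := by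
        rw [P.ι_norm]
        have := aux_starNorm_coef_le ρ ⟨hρ1, hρ2⟩ ψ φ
        have hst : (0:ℝ) ≤ starNorm σ (fun x => (inner ℂ ψ (ρ.U x φ) : ℂ)) := by
          calc (0:ℝ) ≤ ‖P.ι (fB ψ φ)‖ := norm_nonneg _
          _ = _ := P.ι_norm _
        nlinarith [norm_nonneg ω, norm_nonneg ψ, norm_nonneg φ]
  have hmk : ∀ φ : ρ.H, ∃ v : ρ.H,
      (∀ ψ, (inner ℂ ψ v : ℂ) = ω (P.ι (fB ψ φ))) ∧ ‖v‖ ≤ ‖ω‖ * ‖φ‖ := by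
    intro φ
    have hfadd : ∀ ψ₁ ψ₂ : ρ.H, fB (ψ₁ + ψ₂) φ = fB ψ₁ φ + fB ψ₂ φ := by
      intro ψ₁ ψ₂
      apply Subtype.ext
      funext x
      show (inner ℂ (ψ₁ + ψ₂) (ρ.U x φ) : ℂ)
        = (inner ℂ ψ₁ (ρ.U x φ) : ℂ) + (inner ℂ ψ₂ (ρ.U x φ) : ℂ)
      exact inner_add_left _ _ _
    have hfsmul : ∀ (c : ℂ) (ψ : ρ.H), fB (c • ψ) φ = (starRingEnd ℂ) c • fB ψ φ := by
      intro c ψ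
      apply Subtype.ext
      funext x
      show (inner ℂ (c • ψ) (ρ.U x φ) : ℂ) = (starRingEnd ℂ) c * (inner ℂ ψ (ρ.U x φ) : ℂ)
      exact inner_smul_left _ _ _
    let gL : ρ.H →ₗ[ℂ] ℂ :=
      { toFun := fun ψ => (starRingEnd ℂ) (ω (P.ι (fB ψ φ)))
        map_add' := by
          intro ψ₁ ψ₂
          simp only [hfadd, map_add]
        map_smul' := by
          intro c ψ
          simp only [hfsmul, map_smul, smul_eq_mul, map_mul, RingHom.id_apply,
            Complex.conj_conj] }
    have hb : ∀ ψ, ‖gL ψ‖ ≤ (‖ω‖ * ‖φ‖) * ‖ψ‖ := by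
      intro ψ
      show ‖(starRingEnd ℂ) (ω (P.ι (fB ψ φ)))‖ ≤ (‖ω‖ * ‖φ‖) * ‖ψ‖
      rw [RingHomIsometric.norm_map]
      exact hBnorm ψ φ
    let g : ρ.H →L[ℂ] ℂ := gL.mkContinuous (‖ω‖ * ‖φ‖) hb
    refine ⟨(InnerProductSpace.toDual ℂ ρ.H).symm g, ?_, ?_⟩
    · intro ψ
      have h1 : (inner ℂ ((InnerProductSpace.toDual ℂ ρ.H).symm g) ψ : ℂ) = g ψ :=
        InnerProductSpace.toDual_symm_apply
      have h2 : (inner ℂ ψ ((InnerProductSpace.toDual ℂ ρ.H).symm g) : ℂ)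
          = (starRingEnd ℂ) (g ψ) := by
        rw [← inner_conj_symm, h1]
      rw [h2]
      show (starRingEnd ℂ) ((starRingEnd ℂ) (ω (P.ι (fB ψ φ)))) = _
      exact Complex.conj_conj _
    · rw [LinearIsometryEquiv.norm_map]
      exact gL.mkContinuous_norm_le (by positivity) hb
  choose Tfun hT1 hT2 using hmk
  have hadd : ∀ φ₁ φ₂ : ρ.H, Tfun (φ₁ + φ₂) = Tfun φ₁ + Tfun φ₂ := by
    intro φ₁ φ₂
    refine ext_inner_left ℂ fun ψ => ?_
    rw [hT1, inner_add_right, hT1, hT1]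
    have hf : fB ψ (φ₁ + φ₂) = fB ψ φ₁ + fB ψ φ₂ := by
      apply Subtype.ext
      funext x
      show (inner ℂ ψ (ρ.U x (φ₁ + φ₂)) : ℂ)
        = (inner ℂ ψ (ρ.U x φ₁) : ℂ) + (inner ℂ ψ (ρ.U x φ₂) : ℂ)
      rw [map_add, inner_add_right]
    rw [hf, map_add, map_add]
  have hsmul : ∀ (c : ℂ) (φ : ρ.H), Tfun (c • φ) = c • Tfun φ := by
    intro c φ
    refine ext_inner_left ℂ fun ψ => ?_
    rw [hT1, inner_smul_right, hT1]
    have hf : fB ψ (c • φ) = c • fB ψ φ := by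
      apply Subtype.ext
      funext x
      show (inner ℂ ψ (ρ.U x (c • φ)) : ℂ) = c * (inner ℂ ψ (ρ.U x φ) : ℂ)
      rw [map_smul, inner_smul_right]
    rw [hf, map_smul, map_smul, smul_eq_mul]
  let Tlin : ρ.H →ₗ[ℂ] ρ.H :=
    { toFun := Tfun
      map_add' := hadd
      map_smul' := hsmul }
  let T : ρ.H →L[ℂ] ρ.H := Tlin.mkContinuous ‖ω‖ (fun φ => hT2 φ)
  have hTapp : ∀ φ, T φ = Tfun φ := fun _ => rfl
  refine ⟨T, ?_, ?_, ?_, ?_⟩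
  · exact Tlin.mkContinuous_norm_le (norm_nonneg ω) _
  · intro ψ φ f hf
    have hfeq : f = fB ψ φ := Subtype.ext hf
    rw [hfeq, hTapp, hT1]
  · intro T' hT'
    ext φ
    refine ext_inner_left ℂ fun ψ => ?_
    rw [hT' ψ φ (fB ψ φ) rfl, hTapp, hT1]
  · intro ψ₀ φ hφ
    set K := Submodule.span ℂ (Set.range fun x : G => ρ.U x ψ₀) with hK
    have hUK : ∀ (x : G) (v : ρ.H),
        v ∈ K.topologicalClosure → ρ.U x v ∈ K.topologicalClosure := by
      intro x v hv
      have hmap : Submodule.map (ρ.U x : ρ.H →ₗ[ℂ] ρ.H) K ≤ K := by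
        rw [hK, Submodule.map_span]
        refine Submodule.span_le.2 ?_
        rintro _ ⟨_, ⟨y, rfl⟩, rfl⟩
        have hc : ρ.U x (ρ.U y ψ₀) = σ x y • ρ.U (x * y) ψ₀ := by
          have h2 := hρ2 x y
          have h3 : (ρ.U x ∘L ρ.U y) ψ₀ = (σ x y • ρ.U (x * y)) ψ₀ := by rw [h2]
          simpa using h3
        show ρ.U x (ρ.U y ψ₀) ∈ K
        rw [hc]
        exact Submodule.smul_mem _ _ (Submodule.subset_span ⟨x * y, rfl⟩)
      have hv' : v ∈ closure (K : Set ρ.H) := by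
        rwa [← Submodule.topologicalClosure_coe, SetLike.mem_coe]
      have h1 : ρ.U x v ∈ closure ((ρ.U x) '' (K : Set ρ.H)) :=
        image_closure_subset_closure_image (ρ.U x).continuous ⟨v, hv', rfl⟩
      have h2 : closure ((ρ.U x) '' (K : Set ρ.H)) ⊆ closure (K : Set ρ.H) := by
        refine closure_mono ?_
        rintro _ ⟨u, hu, rfl⟩
        exact hmap (Submodule.mem_map_of_mem hu)
      have h3 := h2 h1
      rwa [← Submodule.topologicalClosure_coe, SetLike.mem_coe] at h3
    rw [← Submodule.orthogonal_orthogonal_eq_closure]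
    rw [Submodule.mem_orthogonal]
    intro ψ hψ
    have hvanish : ∀ v ∈ K.topologicalClosure, (inner ℂ ψ v : ℂ) = 0 := by
      intro v hv
      have hcl : IsClosed {v : ρ.H | (inner ℂ ψ v : ℂ) = 0} :=
        isClosed_eq (Continuous.inner continuous_const continuous_id) continuous_const
      have hsub : (K : Set ρ.H) ⊆ {v : ρ.H | (inner ℂ ψ v : ℂ) = 0} := fun u hu =>
        (Submodule.mem_orthogonal' K ψ).1 hψ u hu
      have hv' : v ∈ closure (K : Set ρ.H) := by
        rwa [← Submodule.topologicalClosure_coe, SetLike.mem_coe]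
      exact closure_minimal hsub hcl hv'
    have hzero : fB ψ φ = 0 := by
      apply Subtype.ext
      funext x
      show (inner ℂ ψ (ρ.U x φ) : ℂ) = 0
      exact hvanish _ (hUK x φ hφ)
    rw [hTapp, hT1, hzero, map_zero, map_zero]

end
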